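/- Selection semantics of ⊓: for a simple term τ (a conjunction of states of distinct variables), a formula Δ, and a world w, we have w ⊨ ⊓τ·Δ if and only if w ⊨ Δ and every world w' obtained from w by setting some subset of the variables mentioned in τ to their states in τ also satisfies Δ. -/

import Mathlib

open scoped Classical

/-- Formulas over finite-domain variables: each variable `X : V` has domain `D X`.
A literal of `X` is (intended to be) a nonempty proper subset of `D X`'s states. -/
inductive Form (V : Type) (D : V → Type) : Type where
  | top : Form V D
  | bot : Form V D
  | lit : (X : V) → Set (D X) → Form V D
  | neg : Form V D → Form V D
  | and : Form V D → Form V D → Form V D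
  | or : Form V D → Form V D → Form V D

namespace Form

variable {V : Type} {D : V → Type}

/-- Satisfaction of a formula by a world. -/
def sat (w : ∀ X, D X) : Form V D → Prop
  | top => True
  | bot => False
  | lit X s => w X ∈ s
  | neg φ => ¬ sat w φ
  | and φ ψ => sat w φ ∧ sat w ψ
  | or φ ψ => sat w φ ∨ sat w ψ

/-- Conditioning `Δ|x` of a formula on state `x` of variable `X`: each `X`-literal
`ℓ` is replaced by `⊤` if `x ∈ ℓ` and by `⊥` otherwise. -/
noncomputable def cond (X : V) (x : D X) : Form V D → Form V D
  | top => top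
  | bot => bot
  | lit Y s => if h : X = Y then (if h ▸ x ∈ s then top else bot) else lit Y s
  | neg φ => neg (cond X x φ)
  | and φ ψ => and (cond X x φ) (cond X x ψ)
  | or φ ψ => or (cond X x φ) (cond X x ψ)

/-- The selection operator `⊓x·Δ := (Δ|x) ∧ Δ`. -/
noncomputable def sel (X : V) (x : D X) (Δ : Form V D) : Form V D :=
  and (cond X x Δ) Δ

/-- Logical equivalence of formulas (same models). -/
def equiv (φ ψ : Form V D) : Prop := ∀ w, sat w φ ↔ sat w ψ

/-- Variable `X` occurs (appears) in the formula. -/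
def occurs (X : V) : Form V D → Prop
  | top => False
  | bot => False
  | lit Y _ => Y = X
  | neg φ => occurs X φ
  | and φ ψ => occurs X φ ∨ occurs X ψ
  | or φ ψ => occurs X φ ∨ occurs X ψ

/-- NNF: negation-free, and every literal is a nonempty proper subset of states. -/
def isNNF : Form V D → Prop
  | top => True
  | bot => True
  | lit _ s => s.Nonempty ∧ s ≠ Set.univ
  | neg _ => False
  | and φ ψ => isNNF φ ∧ isNNF ψ
  | or φ ψ => isNNF φ ∧ isNNF ψ

/-- The `X`-literal `s` occurs in the formula. -/
def litOccurs (X : V) (s : Set (D X)) : Form V D → Prop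
  | top => False
  | bot => False
  | lit Y t => ∃ h : Y = X, h ▸ t = s
  | neg φ => litOccurs X s φ
  | and φ ψ => litOccurs X s φ ∨ litOccurs X s ψ
  | or φ ψ => litOccurs X s φ ∨ litOccurs X s ψ

/-- Every literal in the formula is implied by the instance `I`
(i.e., contains `I`'s state of its variable). -/
def litsImp (I : ∀ X, D X) : Form V D → Prop
  | top => True
  | bot => True
  | lit X s => I X ∈ s
  | neg φ => litsImp I φ
  | and φ ψ => litsImp I φ ∧ litsImp I ψ
  | or φ ψ => litsImp I φ ∧ litsImp I ψ

/-- Iterated selection `⊓` over a list of variables, using states from `v`. -/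
noncomputable def selList (v : ∀ X, D X) : List V → Form V D → Form V D
  | [], Δ => Δ
  | X :: L, Δ => sel X (v X) (selList v L Δ)

/-- The general reason `⊓I·Δ`: selection applied for all states of instance `I`. -/
noncomputable def selAll [Fintype V] (I : ∀ X, D X) (Δ : Form V D) : Form V D :=
  selList I (Finset.univ : Finset V).toList Δ

noncomputable def listAnd : List (Form V D) → Form V D
  | [] => top
  | φ :: L => and φ (listAnd L)

/-- Universal literal quantification `∀x·Δ := (Δ|x) ∧ ⋀_{y ≠ x} (x ∨ Δ|y)`. -/
noncomputable def uq (X : V) [Fintype (D X)] (x : D X) (Δ : Form V D) : Form V D :=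
  letI : DecidableEq (D X) := fun _ _ => Classical.propDecidable _
  and (cond X x Δ)
    (listAnd ((((Finset.univ : Finset (D X)).erase x).toList).map
      (fun y => or (lit X ({x} : Set (D X))) (cond X y Δ))))

/-- Iterated universal literal quantification over a list of variables. -/
noncomputable def uqList [∀ X, Fintype (D X)] (v : ∀ X, D X) : List V → Form V D → Form V D
  | [], Δ => Δ
  | X :: L, Δ => uq X (v X) (uqList v L Δ)

/-- The complete reason `∀I·Δ`. -/
noncomputable def uqAll [Fintype V] [∀ X, Fintype (D X)] (I : ∀ X, D X) (Δ : Form V D) :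
    Form V D :=
  uqList I (Finset.univ : Finset V).toList Δ

end Form

/-- A term: a conjunction of literals over distinct variables. Variable `X` is
mentioned iff `lits X ≠ univ`; each literal is nonempty (terms are consistent). -/
structure MvTerm (V : Type) (D : V → Type) : Type where
  lits : ∀ X, Set (D X)
  nonempty : ∀ X, (lits X).Nonempty

/-- A clause: a disjunction of literals over distinct variables. Variable `X` is
mentioned iff `lits X ≠ ∅`; each literal is proper (clauses are never valid). -/
structure MvClause (V : Type) (D : V → Type) : Type where
  lits : ∀ X, Set (D X)
  proper : ∀ X, lits X ≠ Set.univ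

namespace MvTerm

variable {V : Type} {D : V → Type}

def tsat (w : ∀ X, D X) (τ : MvTerm V D) : Prop := ∀ X, w X ∈ τ.lits X

def vars (τ : MvTerm V D) : Set V := {X | τ.lits X ≠ Set.univ}

/-- A simple term assigns a single state to each of its variables. -/
def simple (τ : MvTerm V D) : Prop :=
  ∀ X, τ.lits X ≠ Set.univ → ∃ x, τ.lits X = ({x} : Set (D X))

end MvTerm

namespace MvClause

variable {V : Type} {D : V → Type}

def csat (w : ∀ X, D X) (σ : MvClause V D) : Prop := ∃ X, w X ∈ σ.lits X

def vars (σ : MvClause V D) : Set V := {X | σ.lits X ≠ (∅ : Set (D X))}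

/-- A simple clause: all its literals are single states. -/
def simple (σ : MvClause V D) : Prop :=
  ∀ X, σ.lits X ≠ (∅ : Set (D X)) → ∃ x, σ.lits X = ({x} : Set (D X))

end MvClause

section PrimeDefs

variable {V : Type} {D : V → Type}

def termImp (τ τ' : MvTerm V D) : Prop := ∀ w, τ.tsat w → τ'.tsat w

def clauseImp (σ σ' : MvClause V D) : Prop := ∀ w, σ.csat w → σ'.csat w

/-- A prime implicant of the set of worlds `M`: a ⊨-maximal term implying `M`. -/
def isPrimeImplicantOf (M : (∀ X, D X) → Prop) (τ : MvTerm V D) : Prop :=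
  (∀ w, τ.tsat w → M w) ∧
  ∀ τ' : MvTerm V D, (∀ w, τ'.tsat w → M w) → termImp τ τ' → τ' = τ

/-- A prime implicate of the set of worlds `M`: a ⊨-minimal clause implied by `M`. -/
def isPrimeImplicateOf (M : (∀ X, D X) → Prop) (σ : MvClause V D) : Prop :=
  (∀ w, M w → σ.csat w) ∧
  ∀ σ' : MvClause V D, (∀ w, M w → σ'.csat w) → clauseImp σ' σ → σ' = σ

/-- Remove subsumed terms: delete any term strictly implied by another in the set. -/
def removeSubsumedT (S : Set (MvTerm V D)) : Set (MvTerm V D) :=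
  {τ ∈ S | ¬ ∃ τ' ∈ S, τ' ≠ τ ∧ termImp τ τ'}

/-- Remove subsumed clauses: delete any clause strictly implying another in the set. -/
def removeSubsumedC (S : Set (MvClause V D)) : Set (MvClause V D) :=
  {σ ∈ S | ¬ ∃ σ' ∈ S, σ' ≠ σ ∧ clauseImp σ' σ}

end PrimeDefs

section Aux

variable {V : Type} {D : V → Type} [DecidableEq V]

lemma sat_cond (X : V) (x : D X) (Δ : Form V D) (w : ∀ Y, D Y) :
    Form.sat w (Form.cond X x Δ) ↔ Form.sat (Function.update w X x) Δ := by
  induction Δ with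
  | top => simp [Form.cond, Form.sat]
  | bot => simp [Form.cond, Form.sat]
  | lit Y s =>
    by_cases h : X = Y
    · subst h
      by_cases hx : x ∈ s <;> simp [Form.cond, Form.sat, hx, Function.update_self]
    · simp [Form.cond, h, Form.sat, Function.update_of_ne (Ne.symm h)]
  | neg φ ih => simp [Form.cond, Form.sat, ih]
  | and φ ψ ih1 ih2 => simp [Form.cond, Form.sat, ih1, ih2]
  | or φ ψ ih1 ih2 => simp [Form.cond, Form.sat, ih1, ih2]

lemma ovr_update (v w : ∀ X, D X) (Y : V) (u : Finset V) :
    (fun X => if X ∈ u then v X else Function.update w Y (v Y) X) =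
    (fun X => if X ∈ insert Y u then v X else w X) := by
  funext X
  by_cases hu : X ∈ u
  · simp [hu]
  · by_cases hXY : X = Y
    · subst hXY; simp [hu, Function.update_self]
    · simp [hu, hXY, Function.update_of_ne hXY]

lemma sat_selList (v w : ∀ X, D X) (L : List V) (Δ : Form V D) :
    Form.sat w (Form.selList v L Δ) ↔
      ∀ u : Finset V, u ⊆ L.toFinset →
        Form.sat (fun X => if X ∈ u then v X else w X) Δ := by
  induction L generalizing w with
  | nil =>
    constructor
    · intro h u hu
      have : u = ∅ := Finset.subset_empty.mp (by simpa using hu)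
      subst this
      simpa [Form.selList] using h
    · intro h
      have := h ∅ (by simp)
      simpa [Form.selList] using this
  | cons Y L ih =>
    show Form.sat w (Form.sel Y (v Y) (Form.selList v L Δ)) ↔ _
    rw [show Form.sat w (Form.sel Y (v Y) (Form.selList v L Δ)) ↔
        Form.sat w (Form.cond Y (v Y) (Form.selList v L Δ)) ∧
        Form.sat w (Form.selList v L Δ) from Iff.rfl]
    rw [sat_cond, ih, ih]
    constructor
    · rintro ⟨h1, h2⟩ u hu
      by_cases hY : Y ∈ u
      · have hsub : u.erase Y ⊆ L.toFinset := by
          intro a ha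
          have := hu (Finset.mem_of_mem_erase ha)
          simp only [List.toFinset_cons, Finset.mem_insert] at this
          rcases this with h | h
          · exact absurd h (Finset.ne_of_mem_erase ha)
          · exact h
        have := h1 (u.erase Y) hsub
        rw [ovr_update, Finset.insert_erase hY] at this
        exact this
      · refine h2 u ?_
        intro a ha
        have := hu ha
        simp only [List.toFinset_cons, Finset.mem_insert] at this
        rcases this with h | h
        · exact absurd (h ▸ ha) hY
        · exact h
    · intro h
      constructor
      · intro u hu
        have := h (insert Y u) (by
          simp only [List.toFinset_cons]
          exact Finset.insert_subset_insert _ hu)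
        rw [ovr_update]
        exact this
      · intro u hu
        exact h u (fun a ha => by
          simp only [List.toFinset_cons, Finset.mem_insert]
          exact Or.inr (hu ha))

end Aux

/-- selection semantics of `⊓`. For a simple term `τ` (domain `s`,
values `v`), `w ⊨ ⊓τ·Δ` iff `w ⊨ Δ` and every world obtained from `w` by setting
some subset of the variables of `τ` to their states in `τ` satisfies `Δ`. -/
theorem selection_semantics {V : Type} {D : V → Type} [DecidableEq V]
    (Δ : Form V D) (s : Finset V) (v : ∀ X, D X) (w : ∀ X, D X) :
    Form.sat w (Form.selList v s.toList Δ) ↔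
      Form.sat w Δ ∧
      ∀ u : Finset V, u ⊆ s →
        Form.sat (fun X => if X ∈ u then v X else w X) Δ := by
  rw [sat_selList]
  constructor
  · intro h
    refine ⟨?_, fun u hu => h u (by simpa using hu)⟩
    have := h ∅ (by simp)
    simpa using this
  · rintro ⟨_, h⟩ u hu
    exact h u (by simpa using hu)
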